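/- Let G and H be nonzero formal power series in ℝ[[ρ,θ]] whose common vertices satisfy the non-vanishing condition for addition, and suppose ℘(Δ(H)) ⊆ ℘(Δ(G)). Then for every edge E of the Newton polygon of G, the E-polynomial of G+H equals the sum of the E-polynomials of G and H: (G+H)_E = G_E + H_E. If moreover N_H strictly lies above N_G (no valid index of H lies on N_G), then (G+H)_E = G_E for every edge E of N_G. -/

import Mathlib

open scoped Pointwise

/-- The coefficient of `ρ^i θ^j` in a formal power series in two variables over `ℝ`. -/
noncomputable def coef (F : MvPowerSeries (Fin 2) ℝ) (p : ℕ × ℕ) : ℝ :=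
  MvPowerSeries.coeff (Finsupp.single (0 : Fin 2) p.1 + Finsupp.single (1 : Fin 2) p.2) F

/-- The support (valid index set) `Δ(F)` of a power series. -/
noncomputable def suppSet (F : MvPowerSeries (Fin 2) ℝ) : Set (ℕ × ℕ) :=
  {p | coef F p ≠ 0}

/-- Embedding of lattice indices into `ℝ²`. -/
noncomputable def embed (p : ℕ × ℕ) : ℝ × ℝ := ((p.1 : ℝ), (p.2 : ℝ))

/-- The lower convex semi-hull `℘(S) = conv(S + ℝ≥0²)` of a set of lattice points. -/
noncomputable def lsh (S : Set (ℕ × ℕ)) : Set (ℝ × ℝ) :=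
  convexHull ℝ (embed '' S + {q : ℝ × ℝ | 0 ≤ q.1 ∧ 0 ≤ q.2})

/-- The vertex set `Δ^V(F)` of the Newton polygon. -/
noncomputable def vertexSet (F : MvPowerSeries (Fin 2) ℝ) : Set (ℕ × ℕ) :=
  {p | embed p ∈ (lsh (suppSet F)).extremePoints ℝ}

/-- The set `Λ^V(G\H)` of vanishing common vertices. -/
noncomputable def lamV (G H : MvPowerSeries (Fin 2) ℝ) : Set (ℕ × ℕ) :=
  {p | p ∈ vertexSet G ∧ p ∈ suppSet H ∧ coef G p + coef H p = 0}

/-- The linear functional `(u,v) ↦ u − v/ξ`. -/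
noncomputable def phiFun (ξ : ℝ) (q : ℝ × ℝ) : ℝ := q.1 - q.2 / ξ

/-- The `ξ`-component `σ(F,ξ)` of the Newton polygon: the face of `℘(Δ(F))` on which
the functional `(u,v) ↦ u − v/ξ` attains its minimum. -/
noncomputable def component (F : MvPowerSeries (Fin 2) ℝ) (ξ : ℝ) : Set (ℝ × ℝ) :=
  {p | p ∈ lsh (suppSet F) ∧ ∀ q ∈ lsh (suppSet F), phiFun ξ p ≤ phiFun ξ q}

/-- `E` is an edge of the Newton polygon of `F`: a non-degenerate `ξ`-component
for some negative slope `ξ`. -/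
def IsEdge (F : MvPowerSeries (Fin 2) ℝ) (E : Set (ℝ × ℝ)) : Prop :=
  ∃ ξ : ℝ, ξ < 0 ∧ E = component F ξ ∧ ¬ E.Subsingleton

/-- The Newton polygon of `F` (compact part of the boundary of `℘(Δ(F))`),
realized as the union of all `ξ`-components with `ξ < 0`. -/
noncomputable def newtonSet (F : MvPowerSeries (Fin 2) ℝ) : Set (ℝ × ℝ) :=
  ⋃ ξ ∈ Set.Iio (0 : ℝ), component F ξ

/-- The `E`-polynomial `F_E(θ) = Σ_{(i,j) ∈ E ∩ Δ(F)} a_{i,j} θ^j`. -/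
noncomputable def edgePoly (F : MvPowerSeries (Fin 2) ℝ) (E : Set (ℝ × ℝ)) : Polynomial ℝ :=
  ∑ᶠ p ∈ {p : ℕ × ℕ | p ∈ suppSet F ∧ embed p ∈ E},
    Polynomial.C (coef F p) * Polynomial.X ^ p.2


section Aux

private lemma coef_add' (G H : MvPowerSeries (Fin 2) ℝ) (p : ℕ × ℕ) :
    coef (G + H) p = coef G p + coef H p := by
  simp [coef, map_add]

private lemma term_support (F : MvPowerSeries (Fin 2) ℝ) :
    Function.support (fun p : ℕ × ℕ => Polynomial.C (coef F p) * Polynomial.X ^ p.2)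
      = suppSet F := by
  ext p
  simp [Function.mem_support, suppSet, mul_eq_zero, pow_eq_zero_iff, Polynomial.X_ne_zero]

private lemma edgePoly_eq (F : MvPowerSeries (Fin 2) ℝ) (E : Set (ℝ × ℝ)) :
    edgePoly F E = ∑ᶠ p ∈ {p : ℕ × ℕ | embed p ∈ E},
      Polynomial.C (coef F p) * Polynomial.X ^ p.2 := by
  rw [edgePoly, ← finsum_mem_inter_support
      (fun p : ℕ × ℕ => Polynomial.C (coef F p) * Polynomial.X ^ p.2)
      {p : ℕ × ℕ | embed p ∈ E}]
  congr 1
  rw [term_support]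
  ext p
  simp [Set.mem_inter_iff, and_comm]

private lemma edge_finite {G : MvPowerSeries (Fin 2) ℝ} {E : Set (ℝ × ℝ)}
    (hE : IsEdge G E) : {p : ℕ × ℕ | embed p ∈ E}.Finite := by
  obtain ⟨ξ, hξ, hEc, hns⟩ := hE
  obtain ⟨e, he⟩ : E.Nonempty := by
    by_contra h
    exact hns fun x hx y hy => absurd ⟨x, hx⟩ h
  set m : ℝ := phiFun ξ e with hm
  have hlevel : ∀ q ∈ E, phiFun ξ q = m := by
    intro q hq
    rw [hEc] at hq he
    exact le_antisymm (hq.2 e he.1) (he.2 q hq.1)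
  apply Set.Finite.subset (Set.Finite.prod (Set.finite_Iic ⌊m⌋₊) (Set.finite_Iic ⌊-ξ * m⌋₊))
  intro p hp
  have h1 : phiFun ξ (embed p) = m := hlevel _ hp
  simp only [phiFun, embed] at h1
  have hdiv : (p.2 : ℝ) / ξ ≤ 0 := div_nonpos_of_nonneg_of_nonpos (Nat.cast_nonneg _) hξ.le
  have hcanc : ξ * ((p.2 : ℝ) / ξ) = (p.2 : ℝ) := mul_div_cancel₀ _ (ne_of_lt hξ)
  have hp1 : (p.1 : ℝ) ≤ m := by linarith
  have hp2 : (p.2 : ℝ) ≤ -ξ * m := by nlinarith [mul_nonneg (Nat.cast_nonneg p.1) (neg_nonneg.mpr hξ.le)]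
  exact ⟨Nat.le_floor hp1, Nat.le_floor hp2⟩

end Aux


/-- if common vertices are non-vanishing and `N_H` lies above `N_G`,
then `(G+H)_E = G_E + H_E` for every edge `E` of `N_G`; if moreover `N_H` strictly
lies above `N_G` (no valid index of `H` lies on `N_G`), then `(G+H)_E = G_E`. -/
theorem edgePoly_add (G H : MvPowerSeries (Fin 2) ℝ) (hG : G ≠ 0) (hH : H ≠ 0)
    (hnv : lamV G H ∩ lamV H G = ∅)
    (habove : lsh (suppSet H) ⊆ lsh (suppSet G)) :
    (∀ E : Set (ℝ × ℝ), IsEdge G E →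
        edgePoly (G + H) E = edgePoly G E + edgePoly H E) ∧
    ((embed '' suppSet H) ∩ newtonSet G = ∅ →
      ∀ E : Set (ℝ × ℝ), IsEdge G E → edgePoly (G + H) E = edgePoly G E) := by
  have part1 : ∀ E : Set (ℝ × ℝ), IsEdge G E →
      edgePoly (G + H) E = edgePoly G E + edgePoly H E := by
    intro E hE
    have hfin : {p : ℕ × ℕ | embed p ∈ E}.Finite := edge_finite hE
    rw [edgePoly_eq, edgePoly_eq, edgePoly_eq, ← finsum_mem_add_distrib hfin]
    apply finsum_mem_congr rfl
    intro p _
    rw [coef_add', map_add, add_mul]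
  refine ⟨part1, fun hempty E hE => ?_⟩
  obtain ⟨ξ, hξ, hEc, hns⟩ := hE
  have hH0 : edgePoly H E = 0 := by
    have hset : {p : ℕ × ℕ | p ∈ suppSet H ∧ embed p ∈ E} = ∅ := by
      rw [Set.eq_empty_iff_forall_notMem]
      rintro p ⟨hpH, hpE⟩
      have : embed p ∈ (embed '' suppSet H) ∩ newtonSet G := by
        refine ⟨Set.mem_image_of_mem _ hpH, ?_⟩
        rw [newtonSet]
        exact Set.mem_biUnion hξ (hEc ▸ hpE)
      rw [hempty] at this
      exact this
    rw [edgePoly, hset, finsum_mem_empty]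
  rw [part1 E ⟨ξ, hξ, hEc, hns⟩, hH0, add_zero]
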